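/- For a streak X, the following are equivalent: (1) X is dense, i.e., for all rationals q < r there exists x ∈ X with q < x < r; (2) there exists an element of X that is < 0, and X has the interpolation property: for all a, b ∈ X with a < b there exists x ∈ X with a < x < b; (3) there exists an element of X that is < 0 and an element x ∈ X with 0 < x < 1; (4) there exists z ∈ X with −1 < z < 0. -/
import Mathlib


/-- A prestreak: a strict order (asymmetric and cotransitive) together with a
commutative additive monoid structure and a commutative multiplicative monoid
structure on the positive part, compatible with the order.  (The intrinsic
topology conditions of the paper are omitted, being vacuous in the classical
set-theoretic setting.) -/
structure Prestreak (X : Type*) where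
  lt : X → X → Prop
  add : X → X → X
  zero : X
  mul : X → X → X
  one : X
  lt_asymm : ∀ a b, ¬ (lt a b ∧ lt b a)
  lt_cotrans : ∀ a b x, lt a b → lt a x ∨ lt x b
  add_comm : ∀ a b, add a b = add b a
  add_assoc : ∀ a b c, add (add a b) c = add a (add b c)
  add_zero : ∀ a, add a zero = a
  zero_lt_one : lt zero one
  mul_pos : ∀ a b, lt zero a → lt zero b → lt zero (mul a b)
  mul_comm : ∀ a b, lt zero a → lt zero b → mul a b = mul b a
  mul_assoc : ∀ a b c, lt zero a → lt zero b → lt zero c →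
    mul (mul a b) c = mul a (mul b c)
  mul_one : ∀ a, lt zero a → mul a one = a
  mul_add : ∀ a b c, lt zero a → lt zero b → lt zero c →
    mul (add a b) c = add (mul a c) (mul b c)
  add_lt_add_iff : ∀ a b x, (lt (add a x) (add b x) ↔ lt a b)
  mul_lt_mul_iff : ∀ a b x, lt zero a → lt zero b → lt zero x →
    (lt (mul a x) (mul b x) ↔ lt a b)

namespace Prestreak

variable {X : Type*}

/-- Multiplication by a natural number: `0·a = 0`, `(n+1)·a = n·a + a`. -/
def nsmul (P : Prestreak X) : ℕ → X → X
  | 0, _ => P.zero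
  | n + 1, a => P.add (nsmul P n a) a

/-- The canonical image of a natural number, `n ↦ n·1`. -/
def ofNat (P : Prestreak X) (n : ℕ) : X := P.nsmul n P.one

/-- Comparison `x < q` of an element of a prestreak with a rational number,
using the canonical representation `q = (q.num⁺ − q.num⁻)/q.den`:
`x < (a−b)/c  :=  c·x + b < a`. -/
def ltQ (P : Prestreak X) (x : X) (q : ℚ) : Prop :=
  P.lt (P.add (P.nsmul q.den x) (P.ofNat ((-q.num).toNat))) (P.ofNat q.num.toNat)

/-- Comparison `q < x` of a rational with an element of a prestreak:
`(a−b)/c < x  :=  a < c·x + b`. -/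
def qLt (P : Prestreak X) (q : ℚ) (x : X) : Prop :=
  P.lt (P.ofNat q.num.toNat) (P.add (P.nsmul q.den x) (P.ofNat ((-q.num).toNat)))

/-- The archimedean property for prestreaks. -/
def Archimedean (P : Prestreak X) : Prop :=
  ∀ a b c d : X, P.lt b d →
    ∃ n : ℕ, P.lt (P.add a (P.nsmul n b)) (P.add c (P.nsmul n d))

/-- Tightness: antisymmetry of `≤` (where `a ≤ b := ¬ b < a`).
A streak is a tight archimedean prestreak. -/
def Tight (P : Prestreak X) : Prop :=
  ∀ a b : X, ¬ P.lt a b → ¬ P.lt b a → a = b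

/-- The apartness relation `a # b := a < b ∨ b < a`. -/
def Apart (P : Prestreak X) (a b : X) : Prop := P.lt a b ∨ P.lt b a

/-- A morphism of prestreaks: preserves `<`, `+`, `0`, `1` and products of
positive elements. -/
def IsHom {Y : Type*} (P : Prestreak X) (Q : Prestreak Y) (f : X → Y) : Prop :=
  (∀ a b, P.lt a b → Q.lt (f a) (f b)) ∧
  (∀ a b, f (P.add a b) = Q.add (f a) (f b)) ∧
  f P.zero = Q.zero ∧ f P.one = Q.one ∧
  (∀ a b, P.lt P.zero a → P.lt P.zero b → f (P.mul a b) = Q.mul (f a) (f b))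

/-- A multiplicative structure on a prestreak: a total multiplication which is
commutative, associative, distributes over addition, has unit `1`, restricts to
the given multiplication on positive elements, and satisfies the multiplicity
condition. -/
def IsMultiplicative (P : Prestreak X) (tmul : X → X → X) : Prop :=
  (∀ a b, tmul a b = tmul b a) ∧
  (∀ a b c, tmul (tmul a b) c = tmul a (tmul b c)) ∧
  (∀ a b c, tmul (P.add a b) c = P.add (tmul a c) (tmul b c)) ∧
  (∀ a, tmul a P.one = a) ∧
  (∀ a b, P.lt P.zero a → P.lt P.zero b → tmul a b = P.mul a b) ∧
  (∀ a b c d, P.lt b a → P.lt d c →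
    P.lt (P.add (tmul a d) (tmul b c)) (P.add (tmul a c) (tmul b d)))

end Prestreak

namespace Prestreak

variable {X : Type*} (P : Prestreak X)

/-- The additive commutative monoid underlying a prestreak. -/
def acm : AddCommMonoid X where
  add := P.add
  zero := P.zero
  add_assoc := P.add_assoc
  zero_add a := by show P.add P.zero a = a; rw [P.add_comm]; exact P.add_zero a
  add_zero := P.add_zero
  add_comm := P.add_comm
  nsmul := P.nsmul
  nsmul_zero _ := rfl
  nsmul_succ _ _ := rfl

theorem zero_add' (a : X) : P.add P.zero a = a := by rw [P.add_comm]; exact P.add_zero a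

theorem nsmul_one' (a : X) : P.nsmul 1 a = a := P.zero_add' a

theorem nsmul_zero' (n : ℕ) : P.nsmul n P.zero = P.zero := by
  letI := P.acm
  show n • (0 : X) = 0
  exact smul_zero n

theorem nsmul_add' (n : ℕ) (a b : X) :
    P.nsmul n (P.add a b) = P.add (P.nsmul n a) (P.nsmul n b) := by
  letI := P.acm
  show n • (a + b) = n • a + n • b
  exact nsmul_add a b n

theorem nsmul_nsmul' (m n : ℕ) (a : X) : P.nsmul m (P.nsmul n a) = P.nsmul (m * n) a := by
  letI := P.acm
  show m • n • a = (m * n) • a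
  exact (mul_nsmul' a m n).symm

theorem nsmul_addn (m n : ℕ) (a : X) :
    P.nsmul (m + n) a = P.add (P.nsmul m a) (P.nsmul n a) := by
  letI := P.acm
  show (m + n) • a = m • a + n • a
  exact add_nsmul a m n

theorem lt_asymm' {a b : X} (h : P.lt a b) : ¬ P.lt b a := fun h' => P.lt_asymm a b ⟨h, h'⟩

theorem lt_irrefl' (a : X) : ¬ P.lt a a := fun h => P.lt_asymm a a ⟨h, h⟩

theorem lt_trans' {a b c : X} (h1 : P.lt a b) (h2 : P.lt b c) : P.lt a c := by
  rcases P.lt_cotrans a b c h1 with h | h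
  · exact h
  · exact absurd h2 (P.lt_asymm' h)

theorem add_lt_right {a b : X} (h : P.lt a b) (x : X) : P.lt (P.add a x) (P.add b x) :=
  (P.add_lt_add_iff a b x).2 h

theorem add_lt_left {a b : X} (h : P.lt a b) (x : X) : P.lt (P.add x a) (P.add x b) := by
  rw [P.add_comm x a, P.add_comm x b]; exact P.add_lt_right h x

theorem lt_of_add_lt_right {a b x : X} (h : P.lt (P.add a x) (P.add b x)) : P.lt a b :=
  (P.add_lt_add_iff a b x).1 h

theorem add_lt_add' {a b c d : X} (h1 : P.lt a b) (h2 : P.lt c d) :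
    P.lt (P.add a c) (P.add b d) :=
  P.lt_trans' (P.add_lt_right h1 c) (P.add_lt_left h2 b)

theorem nsmul_lt {a b : X} (h : P.lt a b) (n : ℕ) (hn : 0 < n) :
    P.lt (P.nsmul n a) (P.nsmul n b) := by
  induction n with
  | zero => exact absurd hn (by omega)
  | succ k ih =>
    rcases Nat.eq_zero_or_pos k with rfl | hk
    · show P.lt (P.add (P.nsmul 0 a) a) (P.add (P.nsmul 0 b) b)
      rw [show P.nsmul 0 a = P.zero from rfl, show P.nsmul 0 b = P.zero from rfl,
        P.zero_add', P.zero_add']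
      exact h
    · exact P.add_lt_add' (ih hk) h

theorem lt_of_nsmul_lt {a b : X} {n : ℕ} (h : P.lt (P.nsmul n a) (P.nsmul n b)) : P.lt a b := by
  induction n with
  | zero => exact absurd h (P.lt_irrefl' _)
  | succ k ih =>
    rcases P.lt_cotrans _ _ (P.add (P.nsmul k b) a) h with h' | h'
    · exact ih (P.lt_of_add_lt_right h')
    · have h'' : P.lt (P.add (P.nsmul k b) a) (P.add (P.nsmul k b) b) := h'
      rw [P.add_comm _ a, P.add_comm _ b] at h''
      exact P.lt_of_add_lt_right h''

theorem nsmul_lt_iff' {a b : X} {n : ℕ} (hn : 0 < n) :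
    P.lt (P.nsmul n a) (P.nsmul n b) ↔ P.lt a b :=
  ⟨P.lt_of_nsmul_lt, fun h => P.nsmul_lt h n hn⟩

theorem nsmul_pos {x : X} (hx : P.lt P.zero x) {n : ℕ} (hn : 0 < n) :
    P.lt P.zero (P.nsmul n x) := by
  have := P.nsmul_lt hx n hn
  rwa [P.nsmul_zero'] at this

theorem nsmul_neg {x : X} (hx : P.lt x P.zero) {n : ℕ} (hn : 0 < n) :
    P.lt (P.nsmul n x) P.zero := by
  have := P.nsmul_lt hx n hn
  rwa [P.nsmul_zero'] at this

theorem ofNat_zero' : P.ofNat 0 = P.zero := rfl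

theorem ofNat_one' : P.ofNat 1 = P.one := P.nsmul_one' P.one

theorem ofNat_add' (m n : ℕ) : P.ofNat (m + n) = P.add (P.ofNat m) (P.ofNat n) :=
  P.nsmul_addn m n P.one

theorem ofNat_pos {n : ℕ} (hn : 0 < n) : P.lt P.zero (P.ofNat n) := by
  have := P.nsmul_lt P.zero_lt_one n hn
  rwa [P.nsmul_zero'] at this

theorem ofNat_lt {m n : ℕ} (h : m < n) : P.lt (P.ofNat m) (P.ofNat n) := by
  have h2 : n = m + (n - m) := by omega
  rw [h2, P.ofNat_add']
  have h3 : P.lt P.zero (P.ofNat (n - m)) := P.ofNat_pos (by omega)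
  have h4 := P.add_lt_left h3 (P.ofNat m)
  rwa [P.add_zero] at h4

theorem ofNat_lt_reflect {m n : ℕ} (h : P.lt (P.ofNat m) (P.ofNat n)) : m < n := by
  by_contra h'
  rcases Nat.eq_or_lt_of_le (Nat.le_of_not_lt h') with e | l
  · exact P.lt_irrefl' _ (e ▸ h)
  · exact P.lt_asymm _ _ ⟨h, P.ofNat_lt l⟩

theorem nsmul_ofNat (m n : ℕ) : P.nsmul m (P.ofNat n) = P.ofNat (m * n) :=
  P.nsmul_nsmul' m n P.one

/-- `(q.num : ℚ) = q * q.den`. -/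
theorem qnum_eq (q : ℚ) : (q.num : ℚ) = q * q.den := by
  have h : ((q.den : ℚ)) ≠ 0 := by
    have := q.den_pos
    positivity
  have h2 := Rat.num_div_den q
  rw [div_eq_iff h] at h2
  exact h2

theorem ratlt_num {q r : ℚ} (h : q < r) : q.num * (r.den : ℤ) < r.num * (q.den : ℤ) := by
  have hq : (0:ℚ) < q.den := by exact_mod_cast q.den_pos
  have hr : (0:ℚ) < r.den := by exact_mod_cast r.den_pos
  have h2 : (q.num : ℚ) * r.den < (r.num : ℚ) * q.den := by
    rw [qnum_eq q, qnum_eq r]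
    have h3 : q * ((q.den : ℚ) * r.den) < r * ((q.den : ℚ) * r.den) :=
      mul_lt_mul_of_pos_right h (by positivity)
    nlinarith [h3]
  exact_mod_cast h2

theorem ratlt_of_num {q r : ℚ} (h : q.num * (r.den : ℤ) < r.num * (q.den : ℤ)) : q < r := by
  by_contra h'
  rcases eq_or_lt_of_le (not_lt.1 h') with e | l
  · subst e; omega
  · have := ratlt_num l; omega

theorem num_den_bound (n : ℤ) (m : ℕ) : (0:ℤ) ≤ n * m + (n.natAbs : ℤ) * m := by
  have h1 : -(n * (m:ℤ)) ≤ |n * (m:ℤ)| := neg_le_abs _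
  have h2 : |n * (m:ℤ)| = (n.natAbs : ℤ) * m := by
    rw [abs_mul, Int.abs_eq_natAbs, abs_of_nonneg (by positivity : (0:ℤ) ≤ (m:ℤ))]
  linarith

theorem ltQ_iff (x : X) (q : ℚ) (A B C : ℕ) (hC : 0 < C)
    (h : q.num * (C : ℤ) = ((A : ℤ) - (B : ℤ)) * (q.den : ℤ)) :
    P.ltQ x q ↔ P.lt (P.add (P.nsmul C x) (P.ofNat B)) (P.ofNat A) := by
  set na := q.num.toNat with hna
  set nb := (-q.num).toNat with hnb
  set d := q.den with hd
  have hd1 : 0 < d := q.den_pos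
  have key : C * na + d * B = d * A + C * nb := by
    have h1 : (na : ℤ) - (nb : ℤ) = q.num := by omega
    have h2 : (C : ℤ) * na + d * B = d * A + C * nb := by linear_combination h + (C:ℤ) * h1
    exact_mod_cast h2
  have e1 : P.nsmul C (P.add (P.nsmul d x) (P.ofNat nb))
      = P.add (P.nsmul (C * d) x) (P.ofNat (C * nb)) := by
    rw [P.nsmul_add', P.nsmul_nsmul', P.nsmul_ofNat]
  have e2 : P.nsmul C (P.ofNat na) = P.ofNat (C * na) := P.nsmul_ofNat _ _
  have e3 : P.nsmul d (P.add (P.nsmul C x) (P.ofNat B))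
      = P.add (P.nsmul (d * C) x) (P.ofNat (d * B)) := by
    rw [P.nsmul_add', P.nsmul_nsmul', P.nsmul_ofNat]
  have e4 : P.nsmul d (P.ofNat A) = P.ofNat (d * A) := P.nsmul_ofNat _ _
  have l1 : P.add (P.add (P.nsmul (C * d) x) (P.ofNat (C * nb))) (P.ofNat (d * B))
      = P.add (P.add (P.nsmul (d * C) x) (P.ofNat (d * B))) (P.ofNat (C * nb)) := by
    letI := P.acm
    show (C*d) • x + (C*nb) • P.one + (d*B) • P.one = (d*C) • x + (d*B) • P.one + (C*nb) • P.one
    rw [Nat.mul_comm C d]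
    exact add_right_comm _ _ _
  have l2 : P.add (P.ofNat (C * na)) (P.ofNat (d * B))
      = P.add (P.ofNat (d * A)) (P.ofNat (C * nb)) := by
    rw [← P.ofNat_add', ← P.ofNat_add', key]
  constructor
  · intro hlt
    have h2 := P.nsmul_lt hlt C hC
    rw [e1, e2] at h2
    have h3 := P.add_lt_right h2 (P.ofNat (d * B))
    rw [l1, l2] at h3
    have h4 := P.lt_of_add_lt_right h3
    rw [← e3, ← e4] at h4
    exact P.lt_of_nsmul_lt h4
  · intro hlt
    have h2 := P.nsmul_lt hlt d hd1
    rw [e3, e4] at h2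
    have h3 := P.add_lt_right h2 (P.ofNat (C * nb))
    rw [← l1, ← l2] at h3
    have h4 := P.lt_of_add_lt_right h3
    rw [← e1, ← e2] at h4
    exact P.lt_of_nsmul_lt h4

theorem qLt_iff (x : X) (q : ℚ) (A B C : ℕ) (hC : 0 < C)
    (h : q.num * (C : ℤ) = ((A : ℤ) - (B : ℤ)) * (q.den : ℤ)) :
    P.qLt q x ↔ P.lt (P.ofNat A) (P.add (P.nsmul C x) (P.ofNat B)) := by
  set na := q.num.toNat with hna
  set nb := (-q.num).toNat with hnb
  set d := q.den with hd
  have hd1 : 0 < d := q.den_pos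
  have key : C * na + d * B = d * A + C * nb := by
    have h1 : (na : ℤ) - (nb : ℤ) = q.num := by omega
    have h2 : (C : ℤ) * na + d * B = d * A + C * nb := by linear_combination h + (C:ℤ) * h1
    exact_mod_cast h2
  have e1 : P.nsmul C (P.add (P.nsmul d x) (P.ofNat nb))
      = P.add (P.nsmul (C * d) x) (P.ofNat (C * nb)) := by
    rw [P.nsmul_add', P.nsmul_nsmul', P.nsmul_ofNat]
  have e2 : P.nsmul C (P.ofNat na) = P.ofNat (C * na) := P.nsmul_ofNat _ _
  have e3 : P.nsmul d (P.add (P.nsmul C x) (P.ofNat B))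
      = P.add (P.nsmul (d * C) x) (P.ofNat (d * B)) := by
    rw [P.nsmul_add', P.nsmul_nsmul', P.nsmul_ofNat]
  have e4 : P.nsmul d (P.ofNat A) = P.ofNat (d * A) := P.nsmul_ofNat _ _
  have l1 : P.add (P.add (P.nsmul (C * d) x) (P.ofNat (C * nb))) (P.ofNat (d * B))
      = P.add (P.add (P.nsmul (d * C) x) (P.ofNat (d * B))) (P.ofNat (C * nb)) := by
    letI := P.acm
    show (C*d) • x + (C*nb) • P.one + (d*B) • P.one = (d*C) • x + (d*B) • P.one + (C*nb) • P.one
    rw [Nat.mul_comm C d]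
    exact add_right_comm _ _ _
  have l2 : P.add (P.ofNat (C * na)) (P.ofNat (d * B))
      = P.add (P.ofNat (d * A)) (P.ofNat (C * nb)) := by
    rw [← P.ofNat_add', ← P.ofNat_add', key]
  constructor
  · intro hlt
    have h2 := P.nsmul_lt hlt C hC
    rw [e1, e2] at h2
    have h3 := P.add_lt_right h2 (P.ofNat (d * B))
    rw [l1, l2] at h3
    have h4 := P.lt_of_add_lt_right h3
    rw [← e3, ← e4] at h4
    exact P.lt_of_nsmul_lt h4
  · intro hlt
    have h2 := P.nsmul_lt hlt d hd1
    rw [e3, e4] at h2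
    have h3 := P.add_lt_right h2 (P.ofNat (C * nb))
    rw [← l1, ← l2] at h3
    have h4 := P.lt_of_add_lt_right h3
    rw [← e1, ← e2] at h4
    exact P.lt_of_nsmul_lt h4

theorem ltQ_qLt_trans {x y : X} {q : ℚ} (h1 : P.ltQ x q) (h2 : P.qLt q y) : P.lt x y := by
  have h3 := P.lt_trans' h1 h2
  exact P.lt_of_nsmul_lt (P.lt_of_add_lt_right h3)

theorem lt_ltQ_trans {x y : X} {q : ℚ} (h1 : P.lt x y) (h2 : P.ltQ y q) : P.ltQ x q := by
  have h3 : P.lt (P.add (P.nsmul q.den x) (P.ofNat ((-q.num).toNat)))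
      (P.add (P.nsmul q.den y) (P.ofNat ((-q.num).toNat))) :=
    P.add_lt_right (P.nsmul_lt h1 q.den q.den_pos) _
  exact P.lt_trans' h3 h2

theorem qLt_lt_trans {x y : X} {q : ℚ} (h1 : P.qLt q x) (h2 : P.lt x y) : P.qLt q y := by
  have h3 : P.lt (P.add (P.nsmul q.den x) (P.ofNat ((-q.num).toNat)))
      (P.add (P.nsmul q.den y) (P.ofNat ((-q.num).toNat))) :=
    P.add_lt_right (P.nsmul_lt h2 q.den q.den_pos) _
  exact P.lt_trans' h1 h3

theorem not_qLt_of_ltQ {x : X} {q : ℚ} (h : P.ltQ x q) : ¬ P.qLt q x :=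
  fun h' => P.lt_asymm _ _ ⟨h, h'⟩

theorem ltQ_rat_mono {x : X} {q r : ℚ} (h : q < r) (hx : P.ltQ x q) : P.ltQ x r := by
  set B : ℕ := q.num.natAbs * r.den + r.num.natAbs * q.den with hB
  set C : ℕ := q.den * r.den with hCdef
  have hC : 0 < C := by have := q.den_pos; have := r.den_pos; positivity
  have hq0 : (0:ℤ) ≤ q.num * r.den + B := by
    have h1 := Prestreak.num_den_bound q.num r.den
    have h2 : (0:ℤ) ≤ (r.num.natAbs : ℤ) * q.den := by positivity
    push_cast [hB]
    push_cast at h1 h2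
    linarith
  have hr0 : (0:ℤ) ≤ r.num * q.den + B := by
    have h1 := Prestreak.num_den_bound r.num q.den
    have h2 : (0:ℤ) ≤ (q.num.natAbs : ℤ) * r.den := by positivity
    push_cast [hB]
    push_cast at h1 h2
    linarith
  set A1 : ℕ := (q.num * r.den + B).toNat with hA1
  set A2 : ℕ := (r.num * q.den + B).toNat with hA2
  have hA1' : (A1 : ℤ) = q.num * r.den + B := Int.toNat_of_nonneg hq0
  have hA2' : (A2 : ℤ) = r.num * q.den + B := Int.toNat_of_nonneg hr0
  have c1 : q.num * (C : ℤ) = ((A1 : ℤ) - (B : ℤ)) * (q.den : ℤ) := by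
    rw [hA1']; push_cast [hCdef]; ring
  have c2 : r.num * (C : ℤ) = ((A2 : ℤ) - (B : ℤ)) * (r.den : ℤ) := by
    rw [hA2']; push_cast [hCdef]; ring
  have hlt : A1 < A2 := by
    have := Prestreak.ratlt_num h
    omega
  exact (P.ltQ_iff x r A2 B C hC c2).2
    (P.lt_trans' ((P.ltQ_iff x q A1 B C hC c1).1 hx) (P.ofNat_lt hlt))

theorem qLt_rat_mono {x : X} {q r : ℚ} (h : q < r) (hx : P.qLt r x) : P.qLt q x := by
  set B : ℕ := q.num.natAbs * r.den + r.num.natAbs * q.den with hB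
  set C : ℕ := q.den * r.den with hCdef
  have hC : 0 < C := by have := q.den_pos; have := r.den_pos; positivity
  have hq0 : (0:ℤ) ≤ q.num * r.den + B := by
    have h1 := Prestreak.num_den_bound q.num r.den
    have h2 : (0:ℤ) ≤ (r.num.natAbs : ℤ) * q.den := by positivity
    push_cast [hB]
    push_cast at h1 h2
    linarith
  have hr0 : (0:ℤ) ≤ r.num * q.den + B := by
    have h1 := Prestreak.num_den_bound r.num q.den
    have h2 : (0:ℤ) ≤ (q.num.natAbs : ℤ) * r.den := by positivity
    push_cast [hB]
    push_cast at h1 h2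
    linarith
  set A1 : ℕ := (q.num * r.den + B).toNat with hA1
  set A2 : ℕ := (r.num * q.den + B).toNat with hA2
  have hA1' : (A1 : ℤ) = q.num * r.den + B := Int.toNat_of_nonneg hq0
  have hA2' : (A2 : ℤ) = r.num * q.den + B := Int.toNat_of_nonneg hr0
  have c1 : q.num * (C : ℤ) = ((A1 : ℤ) - (B : ℤ)) * (q.den : ℤ) := by
    rw [hA1']; push_cast [hCdef]; ring
  have c2 : r.num * (C : ℤ) = ((A2 : ℤ) - (B : ℤ)) * (r.den : ℤ) := by
    rw [hA2']; push_cast [hCdef]; ring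
  have hlt : A1 < A2 := by
    have := Prestreak.ratlt_num h
    omega
  exact (P.qLt_iff x q A1 B C hC c1).2
    (P.lt_trans' (P.ofNat_lt hlt) ((P.qLt_iff x r A2 B C hC c2).1 hx))

theorem ltQ_zero {x : X} : P.ltQ x 0 ↔ P.lt x P.zero := by
  show P.lt (P.add (P.nsmul 1 x) (P.ofNat 0)) (P.ofNat 0) ↔ _
  rw [P.nsmul_one', P.ofNat_zero', P.add_zero]

theorem qLt_zero {x : X} : P.qLt 0 x ↔ P.lt P.zero x := by
  show P.lt (P.ofNat 0) (P.add (P.nsmul 1 x) (P.ofNat 0)) ↔ _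
  rw [P.nsmul_one', P.ofNat_zero', P.add_zero]

theorem ltQ_one {x : X} : P.ltQ x 1 ↔ P.lt x P.one := by
  show P.lt (P.add (P.nsmul 1 x) (P.ofNat 0)) (P.ofNat 1) ↔ _
  rw [P.nsmul_one', P.ofNat_zero', P.ofNat_one', P.add_zero]

theorem qLt_neg_one {x : X} : P.qLt (-1) x ↔ P.lt P.zero (P.add x P.one) := by
  show P.lt (P.ofNat 0) (P.add (P.nsmul 1 x) (P.ofNat 1)) ↔ _
  rw [P.nsmul_one', P.ofNat_zero', P.ofNat_one']

theorem ltQ_step {q r : ℚ} (hqr : q < r) (y u : X) (hy : ¬ P.qLt q y)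
    (hu : P.ltQ u (r - q)) : P.ltQ (P.add y u) r := by
  set s : ℚ := r - q with hs
  have hs0 : 0 < s := by rw [hs]; linarith
  have hsnum : 0 < s.num := Rat.num_pos.2 hs0
  set C : ℕ := q.den * r.den * s.den with hCdef
  have hC : 0 < C := by have := q.den_pos; have := r.den_pos; have := s.den_pos; positivity
  set B : ℕ := q.num.natAbs * (r.den * s.den) + r.num.natAbs * (q.den * s.den) with hB
  have hq0 : (0:ℤ) ≤ q.num * (r.den * s.den) + B := by
    have h1 := Prestreak.num_den_bound q.num (r.den * s.den)
    have h2 : (0:ℤ) ≤ (r.num.natAbs : ℤ) * (q.den * s.den) := by positivity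
    push_cast [hB]
    push_cast at h1 h2
    linarith
  have hr0 : (0:ℤ) ≤ r.num * (q.den * s.den) + B := by
    have h1 := Prestreak.num_den_bound r.num (q.den * s.den)
    have h2 : (0:ℤ) ≤ (q.num.natAbs : ℤ) * (r.den * s.den) := by positivity
    push_cast [hB]
    push_cast at h1 h2
    linarith
  have hNs0 : (0:ℤ) ≤ s.num * (q.den * r.den) := by positivity
  set Aq : ℕ := (q.num * (r.den * s.den) + B).toNat with hAq
  set Ar : ℕ := (r.num * (q.den * s.den) + B).toNat with hAr
  set As : ℕ := (s.num * (q.den * r.den)).toNat with hAs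
  have hAq' : (Aq : ℤ) = q.num * (r.den * s.den) + B := Int.toNat_of_nonneg hq0
  have hAr' : (Ar : ℤ) = r.num * (q.den * s.den) + B := Int.toNat_of_nonneg hr0
  have hAs' : (As : ℤ) = s.num * (q.den * r.den) := Int.toNat_of_nonneg hNs0
  have hkey : s.num * ((q.den : ℤ) * r.den) = r.num * ((q.den:ℤ) * s.den) - q.num * ((r.den:ℤ) * s.den) := by
    have hQ : (s.num : ℚ) * ((q.den : ℚ) * r.den) = (r.num : ℚ) * ((q.den:ℚ) * s.den) - (q.num : ℚ) * ((r.den:ℚ) * s.den) := by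
      rw [Prestreak.qnum_eq s, Prestreak.qnum_eq r, Prestreak.qnum_eq q, hs]
      ring
    exact_mod_cast hQ
  have cq : q.num * (C : ℤ) = ((Aq : ℤ) - (B : ℤ)) * (q.den : ℤ) := by
    rw [hAq']; push_cast [hCdef]; ring
  have cr : r.num * (C : ℤ) = ((Ar : ℤ) - (B : ℤ)) * (r.den : ℤ) := by
    rw [hAr']; push_cast [hCdef]; ring
  have cs : s.num * (C : ℤ) = ((As : ℤ) - ((0:ℕ) : ℤ)) * (s.den : ℤ) := by
    rw [hAs']; push_cast [hCdef]; ring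
  have hy' : ¬ P.lt (P.ofNat Aq) (P.add (P.nsmul C y) (P.ofNat B)) :=
    fun h => hy ((P.qLt_iff y q Aq B C hC cq).2 h)
  have hu' : P.lt (P.nsmul C u) (P.ofNat As) := by
    have h := (P.ltQ_iff u s As 0 C hC cs).1 hu
    rwa [P.ofNat_zero', P.add_zero] at h
  have hAA : Aq + As = Ar := by omega
  have h1 : P.lt (P.add (P.ofNat Aq) (P.nsmul C u)) (P.ofNat Ar) := by
    rw [← hAA, P.ofNat_add']
    exact P.add_lt_left hu' _
  rcases P.lt_cotrans _ _ (P.add (P.add (P.nsmul C y) (P.ofNat B)) (P.nsmul C u)) h1 with h2 | h2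
  · exact absurd (P.lt_of_add_lt_right h2) hy'
  · apply (P.ltQ_iff (P.add y u) r Ar B C hC cr).2
    have e : P.add (P.nsmul C (P.add y u)) (P.ofNat B)
        = P.add (P.add (P.nsmul C y) (P.ofNat B)) (P.nsmul C u) := by
      rw [P.nsmul_add']
      letI := P.acm
      show P.nsmul C y + P.nsmul C u + P.ofNat B = P.nsmul C y + P.ofNat B + P.nsmul C u
      exact add_right_comm _ _ _
    rw [e]
    exact h2

theorem exists_rat_btwn' (hA : P.Archimedean) {a b : X} (hab : P.lt a b) :
    ∃ q r : ℚ, q < r ∧ P.ltQ a q ∧ P.qLt r b := by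
  classical
  obtain ⟨n, hn⟩ := hA (P.ofNat 2) a P.zero b hab
  rw [P.zero_add'] at hn
  have hn0 : 0 < n := by
    rcases Nat.eq_zero_or_pos n with rfl | h
    · exfalso
      rw [show P.nsmul 0 a = P.zero from rfl, show P.nsmul 0 b = P.zero from rfl, P.add_zero] at hn
      exact P.lt_asymm _ _ ⟨hn, P.ofNat_pos (by omega)⟩
    · exact h
  obtain ⟨j, hj⟩ := hA P.zero P.zero (P.nsmul n a) P.one P.zero_lt_one
  rw [P.nsmul_zero', P.add_zero] at hj
  have hj' : P.lt P.zero (P.add (P.nsmul n a) (P.ofNat j)) := hj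
  obtain ⟨k, hk⟩ := hA (P.add (P.nsmul n a) (P.ofNat j)) P.zero P.zero P.one P.zero_lt_one
  rw [P.nsmul_zero', P.add_zero, P.zero_add'] at hk
  have hk' : P.lt (P.add (P.nsmul n a) (P.ofNat j)) (P.ofNat k) := hk
  set Y := P.add (P.nsmul n a) (P.ofNat j) with hY
  have hSne : ∃ m, P.lt Y (P.ofNat m) := ⟨k, hk'⟩
  set M := Nat.find hSne with hM
  have hM1 : P.lt Y (P.ofNat M) := Nat.find_spec hSne
  have hMpos : 0 < M := by
    rcases Nat.eq_zero_or_pos M with e | h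
    · exfalso
      rw [e] at hM1
      exact P.lt_asymm _ _ ⟨hM1, hj'⟩
    · exact h
  have hM2 : ¬ P.lt Y (P.ofNat (M - 1)) := Nat.find_min hSne (by omega)
  have hnQ : ((n:ℚ)) ≠ 0 := by
    have : (0:ℚ) < n := by exact_mod_cast hn0
    linarith
  refine ⟨((M:ℚ) - j)/n, ((M:ℚ) + 1 - j)/n, ?_, ?_, ?_⟩
  · have hnQ' : (0:ℚ) < n := by exact_mod_cast hn0
    rw [div_lt_div_iff₀ hnQ' hnQ']
    nlinarith
  · set q : ℚ := ((M:ℚ) - j)/n with hq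
    have cond : q.num * (n : ℤ) = ((M : ℤ) - (j : ℤ)) * (q.den : ℤ) := by
      have e : (q.num : ℚ) * n = ((M:ℚ) - j) * q.den := by
        rw [Prestreak.qnum_eq q, hq]
        field_simp
      exact_mod_cast e
    exact (P.ltQ_iff a q M j n hn0 cond).2 hM1
  · set r : ℚ := ((M:ℚ) + 1 - j)/n with hr
    have cond : r.num * (n : ℤ) = (((M+1 : ℕ) : ℤ) - (j : ℤ)) * (r.den : ℤ) := by
      have e : (r.num : ℚ) * n = (((M+1:ℕ):ℚ) - j) * r.den := by
        rw [Prestreak.qnum_eq r, hr]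
        push_cast
        field_simp
      exact_mod_cast e
    apply (P.qLt_iff b r (M+1) j n hn0 cond).2
    have h5 : P.lt (P.add Y (P.ofNat 2)) (P.add (P.nsmul n b) (P.ofNat j)) := by
      have h6 := P.add_lt_right hn (P.ofNat j)
      have e : P.add (P.add (P.ofNat 2) (P.nsmul n a)) (P.ofNat j) = P.add Y (P.ofNat 2) := by
        rw [hY]
        letI := P.acm
        show P.ofNat 2 + P.nsmul n a + P.ofNat j = P.nsmul n a + P.ofNat j + P.ofNat 2
        exact add_rotate _ _ _
      rwa [e] at h6
    rcases P.lt_cotrans _ _ (P.ofNat (M+1)) h5 with h7 | h7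
    · exfalso
      rw [show M + 1 = (M-1) + 2 by omega, P.ofNat_add'] at h7
      exact hM2 (P.lt_of_add_lt_right h7)
    · exact h7

theorem mul_nsmul_left {x y : X} (hx : P.lt P.zero x) (hy : P.lt P.zero y) (m : ℕ) (hm : 0 < m) :
    P.mul (P.nsmul m x) y = P.nsmul m (P.mul x y) := by
  induction m with
  | zero => omega
  | succ k ih =>
    rcases Nat.eq_zero_or_pos k with rfl | hk
    · rw [P.nsmul_one', P.nsmul_one']
    · have hkx : P.lt P.zero (P.nsmul k x) := P.nsmul_pos hx hk
      rw [show P.nsmul (k+1) x = P.add (P.nsmul k x) x from rfl,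
        P.mul_add _ _ _ hkx hx hy, ih hk,
        show P.nsmul (k+1) (P.mul x y) = P.add (P.nsmul k (P.mul x y)) (P.mul x y) from rfl]

theorem ofNat_mul {A : ℕ} (hA : 0 < A) {w : X} (hw : P.lt P.zero w) :
    P.mul (P.ofNat A) w = P.nsmul A w := by
  have h1 : P.mul P.one w = w := by
    rw [P.mul_comm _ _ P.zero_lt_one hw, P.mul_one _ hw]
  have h2 := P.mul_nsmul_left P.zero_lt_one hw A hA
  rw [h1] at h2
  exact h2

theorem mul_ltQ {x y : X} {s t : ℚ} (hx : P.lt P.zero x) (hy : P.lt P.zero y)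
    (hs : 0 < s) (ht : 0 < t) (h1 : P.ltQ x s) (h2 : P.ltQ y t) :
    P.ltQ (P.mul x y) (s * t) := by
  set A : ℕ := s.num.toNat with hAdef
  set A' : ℕ := t.num.toNat with hA'def
  have hsnum : 0 < s.num := Rat.num_pos.2 hs
  have htnum : 0 < t.num := Rat.num_pos.2 ht
  have hApos : 0 < A := by omega
  have hA'pos : 0 < A' := by omega
  have cs : s.num * ((s.den:ℕ) : ℤ) = ((A : ℤ) - ((0:ℕ) : ℤ)) * (s.den : ℤ) := by
    have : (A : ℤ) = s.num := by omega
    rw [this]; ring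
  have ct : t.num * ((t.den:ℕ) : ℤ) = ((A' : ℤ) - ((0:ℕ) : ℤ)) * (t.den : ℤ) := by
    have : (A' : ℤ) = t.num := by omega
    rw [this]; ring
  have h1' : P.lt (P.nsmul s.den x) (P.ofNat A) := by
    have h := (P.ltQ_iff x s A 0 s.den s.den_pos cs).1 h1
    rwa [P.ofNat_zero', P.add_zero] at h
  have h2' : P.lt (P.nsmul t.den y) (P.ofNat A') := by
    have h := (P.ltQ_iff y t A' 0 t.den t.den_pos ct).1 h2
    rwa [P.ofNat_zero', P.add_zero] at h
  have pCx : P.lt P.zero (P.nsmul s.den x) := P.nsmul_pos hx s.den_pos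
  have pC'y : P.lt P.zero (P.nsmul t.den y) := P.nsmul_pos hy t.den_pos
  have pA : P.lt P.zero (P.ofNat A) := P.ofNat_pos hApos
  have step1 : P.lt (P.mul (P.nsmul s.den x) (P.nsmul t.den y))
      (P.mul (P.ofNat A) (P.nsmul t.den y)) :=
    (P.mul_lt_mul_iff _ _ _ pCx pA pC'y).2 h1'
  have e5 : P.mul (P.ofNat A) (P.nsmul t.den y) = P.nsmul A (P.nsmul t.den y) :=
    P.ofNat_mul hApos pC'y
  have step2 : P.lt (P.nsmul A (P.nsmul t.den y)) (P.nsmul A (P.ofNat A')) :=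
    P.nsmul_lt h2' A hApos
  have e6 : P.nsmul A (P.ofNat A') = P.ofNat (A * A') := P.nsmul_ofNat A A'
  have e7 : P.mul (P.nsmul s.den x) (P.nsmul t.den y) = P.nsmul (s.den * t.den) (P.mul x y) := by
    rw [P.mul_nsmul_left hx pC'y s.den s.den_pos]
    have e8 : P.mul x (P.nsmul t.den y) = P.nsmul t.den (P.mul x y) := by
      rw [P.mul_comm _ _ hx pC'y, P.mul_nsmul_left hy hx t.den t.den_pos,
        P.mul_comm y x hy hx]
    rw [e8, P.nsmul_nsmul']
  have final : P.lt (P.nsmul (s.den * t.den) (P.mul x y)) (P.ofNat (A * A')) := by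
    rw [← e7, ← e6]
    exact P.lt_trans' (by rw [← e5]; exact step1) step2
  have hC : 0 < s.den * t.den := by have := s.den_pos; have := t.den_pos; positivity
  have cst : (s*t).num * (((s.den * t.den) : ℕ) : ℤ) = (((A*A' : ℕ) : ℤ) - ((0:ℕ) : ℤ)) * ((s*t).den : ℤ) := by
    have eA : (A : ℤ) = s.num := by omega
    have eA' : (A' : ℤ) = t.num := by omega
    have hQ : ((s*t).num : ℚ) * ((s.den : ℚ) * t.den) = ((s.num : ℚ) * t.num) * ((s*t).den : ℚ) := by
      rw [Prestreak.qnum_eq (s*t), Prestreak.qnum_eq s, Prestreak.qnum_eq t]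
      ring
    have hZ : (s*t).num * ((s.den : ℤ) * t.den) = (s.num * t.num) * ((s*t).den : ℤ) := by
      exact_mod_cast hQ
    push_cast [eA, eA']
    push_cast at hZ
    linarith
  apply (P.ltQ_iff (P.mul x y) (s*t) (A*A') 0 (s.den * t.den) hC cst).2
  rw [P.ofNat_zero', P.add_zero]
  exact final

end Prestreak

/-- Characterization of dense streaks. -/
theorem characterization_of_dense_streaks {X : Type*} (P : Prestreak X)
    (hA : P.Archimedean) (hT : P.Tight) :
    List.TFAE
      [∀ q r : ℚ, q < r → ∃ x : X, P.qLt q x ∧ P.ltQ x r,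
       (∃ a : X, P.ltQ a 0) ∧
         (∀ a b : X, P.lt a b → ∃ x : X, P.lt a x ∧ P.lt x b),
       (∃ a : X, P.ltQ a 0) ∧ (∃ x : X, P.qLt 0 x ∧ P.ltQ x 1),
       ∃ z : X, P.qLt (-1) z ∧ P.ltQ z 0] := by
  classical
  tfae_have 1 → 2 := by
    intro h1
    constructor
    · obtain ⟨x, _, hx2⟩ := h1 (-1) 0 (by norm_num)
      exact ⟨x, hx2⟩
    · intro a b hab
      obtain ⟨q, r, hqr, haq, hrb⟩ := P.exists_rat_btwn' hA hab
      obtain ⟨x, hqx, hxr⟩ := h1 q r hqr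
      exact ⟨x, P.ltQ_qLt_trans haq hqx, P.ltQ_qLt_trans hxr hrb⟩
  tfae_have 2 → 3 := by
    rintro ⟨ha, hint⟩
    refine ⟨ha, ?_⟩
    obtain ⟨x, h0x, hx1⟩ := hint P.zero P.one P.zero_lt_one
    exact ⟨x, P.qLt_zero.2 h0x, P.ltQ_one.2 hx1⟩
  tfae_have 3 → 4 := by
    rintro ⟨⟨a, ha⟩, ⟨x, h0x, hx1⟩⟩
    have ha' : P.lt a P.zero := P.ltQ_zero.1 ha
    have h0x' : P.lt P.zero x := P.qLt_zero.1 h0x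
    have hx1' : P.lt x P.one := P.ltQ_one.1 hx1
    have hex : ∃ k, ¬ P.lt (P.add a (P.nsmul k x)) P.zero := by
      obtain ⟨M, hM⟩ := hA P.zero P.zero a x h0x'
      rw [P.nsmul_zero', P.add_zero] at hM
      exact ⟨M, P.lt_asymm' hM⟩
    set M0 := Nat.find hex with hM0def
    have hspec : ¬ P.lt (P.add a (P.nsmul M0 x)) P.zero := Nat.find_spec hex
    have hM0pos : 0 < M0 := by
      rcases Nat.eq_zero_or_pos M0 with e | h
      · exfalso
        rw [e] at hspec
        exact hspec (by rw [show P.nsmul 0 x = P.zero from rfl, P.add_zero]; exact ha')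
      · exact h
    have hprev : P.lt (P.add a (P.nsmul (M0 - 1) x)) P.zero :=
      not_not.1 (Nat.find_min hex (by omega))
    set z := P.add a (P.nsmul (M0 - 1) x) with hz
    have hzx : ¬ P.lt (P.add z x) P.zero := by
      have e : P.add z x = P.add a (P.nsmul M0 x) := by
        rw [hz, P.add_assoc,
          show P.add (P.nsmul (M0 - 1) x) x = P.nsmul ((M0 - 1) + 1) x from rfl,
          show (M0 - 1) + 1 = M0 by omega]
      rw [e]; exact hspec
    have hlt : P.lt (P.add z x) (P.add z P.one) := P.add_lt_left hx1' z
    rcases P.lt_cotrans _ _ P.zero hlt with h | h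
    · exact absurd h hzx
    · exact ⟨z, P.qLt_neg_one.2 h, P.ltQ_zero.2 hprev⟩
  tfae_have 4 → 1 := by
    rintro ⟨z, hz1, hz0⟩
    have hz1' : P.lt P.zero (P.add z P.one) := P.qLt_neg_one.1 hz1
    have hz0' : P.lt z P.zero := P.ltQ_zero.1 hz0
    set p := P.add z P.one with hp
    have hp0 : P.lt P.zero p := hz1'
    have hp1 : P.lt p P.one := by
      have h := P.add_lt_right hz0' P.one
      rwa [P.zero_add'] at h
    obtain ⟨s, t, hst, hps, ht1X⟩ := P.exists_rat_btwn' hA hp1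
    have h0s : (0:ℚ) < s := by
      have h1 : P.ltQ P.zero s := P.lt_ltQ_trans hp0 hps
      have h2 : P.lt (P.add (P.nsmul s.den P.zero) (P.ofNat ((-s.num).toNat)))
          (P.ofNat s.num.toNat) := h1
      rw [P.nsmul_zero', P.zero_add'] at h2
      have h3 := P.ofNat_lt_reflect h2
      have h4 : 0 < s.num := by omega
      exact Rat.num_pos.1 h4
    have hs1 : s < 1 := by
      have h2 : P.lt (P.ofNat t.num.toNat)
          (P.add (P.nsmul t.den P.one) (P.ofNat ((-t.num).toNat))) := ht1X
      rw [show P.nsmul t.den P.one = P.ofNat t.den from rfl, ← P.ofNat_add'] at h2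
      have h3 := P.ofNat_lt_reflect h2
      have h4 : t.num < t.den := by omega
      have ht1 : t < 1 := by
        apply Prestreak.ratlt_of_num
        show t.num * ((1:ℚ).den : ℤ) < (1:ℚ).num * (t.den : ℤ)
        rw [show (1:ℚ).den = 1 from rfl, show (1:ℚ).num = 1 from rfl]
        omega
      exact lt_trans hst ht1
    intro q r hqr
    set el : ℕ → X := fun n => Nat.rec p (fun _ ih => P.mul ih p) n with hel
    have el_succ : ∀ k, el (k + 1) = P.mul (el k) p := fun k => rfl
    have el_pos : ∀ n, P.lt P.zero (el n) := by
      intro n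
      induction n with
      | zero => exact hp0
      | succ k ih => rw [el_succ]; exact P.mul_pos _ _ ih hp0
    have el_lt : ∀ n, P.ltQ (el n) (s ^ (n + 1)) := by
      intro n
      induction n with
      | zero => rw [pow_one]; exact hps
      | succ k ih =>
        have h := P.mul_ltQ (el_pos k) hp0 (pow_pos h0s (k + 1)) h0s ih hps
        rw [el_succ, pow_succ]
        exact h
    obtain ⟨m, hm⟩ := exists_pow_lt_of_lt_one (sub_pos.2 hqr) hs1
    have hsm : s ^ (m + 1) < r - q :=
      lt_of_le_of_lt (pow_le_pow_of_le_one h0s.le hs1.le (Nat.le_succ m)) hm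
    set u := el m with hu
    have hu0 : P.lt P.zero u := el_pos m
    have huQ : P.ltQ u (r - q) := P.ltQ_rat_mono hsm (el_lt m)
    have hCz : P.lt (P.nsmul q.den z) P.zero := P.nsmul_neg hz0' q.den_pos
    obtain ⟨N, hN⟩ := hA (P.ofNat ((-q.num).toNat)) (P.nsmul q.den z)
      (P.ofNat q.num.toNat) P.zero hCz
    rw [P.nsmul_zero', P.add_zero] at hN
    set y0 := P.nsmul N z with hy0def
    have hy0 : P.ltQ y0 q := by
      show P.lt (P.add (P.nsmul q.den (P.nsmul N z)) (P.ofNat ((-q.num).toNat)))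
        (P.ofNat q.num.toNat)
      have e : P.nsmul q.den (P.nsmul N z) = P.nsmul N (P.nsmul q.den z) := by
        rw [P.nsmul_nsmul', P.nsmul_nsmul', Nat.mul_comm]
      rw [e, P.add_comm]
      exact hN
    have hCu : P.lt P.zero (P.nsmul q.den u) := P.nsmul_pos hu0 q.den_pos
    obtain ⟨M, hM⟩ := hA (P.ofNat q.num.toNat) P.zero
      (P.add (P.nsmul q.den y0) (P.ofNat ((-q.num).toNat))) (P.nsmul q.den u) hCu
    rw [P.nsmul_zero', P.add_zero] at hM
    have hex2 : ∃ k, P.qLt q (P.add y0 (P.nsmul k u)) := by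
      refine ⟨M, ?_⟩
      show P.lt (P.ofNat q.num.toNat)
        (P.add (P.nsmul q.den (P.add y0 (P.nsmul M u))) (P.ofNat ((-q.num).toNat)))
      have e : P.add (P.nsmul q.den (P.add y0 (P.nsmul M u))) (P.ofNat ((-q.num).toNat))
          = P.add (P.add (P.nsmul q.den y0) (P.ofNat ((-q.num).toNat)))
              (P.nsmul M (P.nsmul q.den u)) := by
        rw [P.nsmul_add']
        have e2 : P.nsmul q.den (P.nsmul M u) = P.nsmul M (P.nsmul q.den u) := by
          rw [P.nsmul_nsmul', P.nsmul_nsmul', Nat.mul_comm]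
        rw [e2]
        letI := P.acm
        show P.nsmul q.den y0 + P.nsmul M (P.nsmul q.den u) + P.ofNat ((-q.num).toNat)
            = P.nsmul q.den y0 + P.ofNat ((-q.num).toNat) + P.nsmul M (P.nsmul q.den u)
        exact add_right_comm _ _ _
      rw [e]
      exact hM
    set M0 := Nat.find hex2 with hM0def
    have hM0 : P.qLt q (P.add y0 (P.nsmul M0 u)) := Nat.find_spec hex2
    have hM0pos : 0 < M0 := by
      rcases Nat.eq_zero_or_pos M0 with e | h
      · exfalso
        rw [e] at hM0
        rw [show P.nsmul 0 u = P.zero from rfl, P.add_zero] at hM0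
        exact P.not_qLt_of_ltQ hy0 hM0
      · exact h
    have hprev : ¬ P.qLt q (P.add y0 (P.nsmul (M0 - 1) u)) := Nat.find_min hex2 (by omega)
    have e : P.add y0 (P.nsmul M0 u) = P.add (P.add y0 (P.nsmul (M0 - 1) u)) u := by
      conv_lhs => rw [show M0 = (M0 - 1) + 1 by omega]
      rw [show P.nsmul ((M0 - 1) + 1) u = P.add (P.nsmul (M0 - 1) u) u from rfl, ← P.add_assoc]
    refine ⟨P.add y0 (P.nsmul M0 u), hM0, ?_⟩
    rw [e]
    exact P.ltQ_step hqr _ u hprev huQ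
  tfae_finish
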